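/- Let ν be a unit vector in ℝ³ and Re, Rm ∈ ℝ³ satisfy the impedance relation ν × (Rm × ν) + λ (ν × Re) = -(ν × (Vm × ν)) - λ (ν × Ve) for some λ > 0 and Ve, Vm ∈ ℝ³. Then ν · (Re × Rm) = -λ |ν × Re + (1/2)(ν × Ve + (1/λ) ν × (Vm × ν))|² + (λ/4)|ν × Ve + (1/λ) ν × (Vm × ν)|². -/

import Mathlib

open scoped RealInnerProductSpace

noncomputable def cross3 (a b : EuclideanSpace ℝ (Fin 3)) : EuclideanSpace ℝ (Fin 3) :=
  (WithLp.equiv 2 (Fin 3 → ℝ)).symm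
    ![a 1 * b 2 - a 2 * b 1, a 2 * b 0 - a 0 * b 2, a 0 * b 1 - a 1 * b 0]

set_option maxHeartbeats 2000000 in
theorem stmt_8 (ν Re Rm Ve Vm : EuclideanSpace ℝ (Fin 3)) (hν : ‖ν‖ = 1)
    (l : ℝ) (hl : 0 < l)
    (himp : cross3 ν (cross3 Rm ν) + l • cross3 ν Re
      = -(cross3 ν (cross3 Vm ν)) - l • cross3 ν Ve) :
    ⟪ν, cross3 Re Rm⟫
      = -l * ‖cross3 ν Re
            + (1 / 2 : ℝ) • (cross3 ν Ve + (1 / l) • cross3 ν (cross3 Vm ν))‖ ^ 2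
        + (l / 4) * ‖cross3 ν Ve + (1 / l) • cross3 ν (cross3 Vm ν)‖ ^ 2 := by
  have hl' : l ≠ 0 := ne_of_gt hl
  have hn : ν 0 ^ 2 + ν 1 ^ 2 + ν 2 ^ 2 = 1 := by
    have h : ⟪ν, ν⟫ = 1 := by
      rw [real_inner_self_eq_norm_sq, hν]; norm_num
    simp only [PiLp.inner_apply, Fin.sum_univ_three, RCLike.inner_apply, conj_trivial] at h
    nlinarith [h]
  have h0 := congrArg (fun v => v 0) himp
  have h1 := congrArg (fun v => v 1) himp
  have h2 := congrArg (fun v => v 2) himp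
  simp only [cross3, WithLp.equiv_symm_apply, WithLp.ofLp_toLp, PiLp.add_apply, PiLp.smul_apply, PiLp.neg_apply, PiLp.sub_apply, smul_eq_mul, Matrix.cons_val_zero, Matrix.cons_val_one, Matrix.head_cons, Matrix.cons_val_two, Matrix.tail_cons] at h0 h1 h2
  rw [← real_inner_self_eq_norm_sq, ← real_inner_self_eq_norm_sq]
  simp only [cross3, WithLp.equiv_symm_apply, WithLp.ofLp_toLp, PiLp.inner_apply, Fin.sum_univ_three, PiLp.add_apply, PiLp.smul_apply, smul_eq_mul, RCLike.inner_apply, conj_trivial, Matrix.cons_val_zero, Matrix.cons_val_one, Matrix.head_cons, Matrix.cons_val_two, Matrix.tail_cons]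
  field_simp
  linear_combination ((16*l) : ℝ) * ((ν 1 * Re 2 - ν 2 * Re 1) * h0 + (ν 2 * Re 0 - ν 0 * Re 2) * h1 + (ν 0 * Re 1 - ν 1 * Re 0) * h2 - (ν 0 * (Re 1 * Rm 2 - Re 2 * Rm 1) + ν 1 * (Re 2 * Rm 0 - Re 0 * Rm 2) + ν 2 * (Re 0 * Rm 1 - Re 1 * Rm 0)) * hn)
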